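/- The worst-case instance for Any Fit algorithms: let C be a positive even integer and let A, B be disjoint finite sets of symbols with |A| = |B| = C. Let T_A be the collection of all (C/2)-element subsets of A, T_B the collection of all (C/2)-element subsets of B, and T = T_A ∪ T_B (a disjoint union). Then: (i) the two-page pagination (T_A, T_B) of T is valid for capacity C and is optimal, since |A ∪ B| = 2C > C so no single page can hold all the tiles of T; (ii) for every t_a ∈ T_A and t_b ∈ T_B, |t_a ∪ t_b| = C; consequently, for any bijection φ : T_A → T_B, the pagination of T whose pages are the pairs {t, φ(t)} for t ∈ T_A is a valid pagination with exactly binom(C, C/2) pages, each of volume exactly C. -/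

import Mathlib

open Finset

/-- The volume of a page (a finite set of tiles): the number of distinct symbols. -/
def volume {α : Type*} [DecidableEq α] (p : Finset (Finset α)) : ℕ := (p.sup id).card

/-- A pagination of `T`: a partition of `T` into nonempty pages. -/
def IsPagination {α : Type*} (T : Finset (Finset α)) (P : Finset (Finset (Finset α))) : Prop :=
  (∀ p ∈ P, p.Nonempty) ∧
  (∀ p ∈ P, ∀ q ∈ P, p ≠ q → Disjoint p q) ∧
  (∀ t : Finset α, t ∈ T ↔ ∃ p ∈ P, t ∈ p)

/-- A pagination is valid for capacity `C` if every page has volume at most `C`. -/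
def IsValidPagination {α : Type*} [DecidableEq α] (C : ℕ) (T : Finset (Finset α))
    (P : Finset (Finset (Finset α))) : Prop :=
  IsPagination T P ∧ ∀ p ∈ P, volume p ≤ C

/-- The worst-case instance for Any Fit algorithms: with `C` even, `A, B` disjoint sets
of `C` symbols, `T_A`, `T_B` the `(C/2)`-element subsets of `A` resp. `B`, and
`T = T_A ∪ T_B`: the two-page pagination `(T_A, T_B)` is valid and optimal, every pair
`{t_a, t_b}` with `t_a ∈ T_A`, `t_b ∈ T_B` has volume exactly `C`, and any bijection
`φ : T_A → T_B` yields a valid pagination whose pages are the pairs `{t, φ t}`, with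
exactly `binom(C, C/2)` pages, each of volume exactly `C`. -/
theorem stmt10 {α : Type*} [DecidableEq α] (C : ℕ) (hC : 0 < C) (hE : Even C)
    (A B : Finset α) (hAB : Disjoint A B) (hA : A.card = C) (hB : B.card = C) :
    (A ∪ B).card = 2 * C ∧
    IsValidPagination C (A.powersetCard (C / 2) ∪ B.powersetCard (C / 2))
      {A.powersetCard (C / 2), B.powersetCard (C / 2)} ∧
    ({A.powersetCard (C / 2), B.powersetCard (C / 2)} :
      Finset (Finset (Finset α))).card = 2 ∧
    (∀ Q, IsValidPagination C (A.powersetCard (C / 2) ∪ B.powersetCard (C / 2)) Q →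
      2 ≤ Q.card) ∧
    (∀ ta ∈ A.powersetCard (C / 2), ∀ tb ∈ B.powersetCard (C / 2),
      (ta ∪ tb).card = C) ∧
    (∀ φ : Finset α → Finset α,
      Set.BijOn φ ↑(A.powersetCard (C / 2)) ↑(B.powersetCard (C / 2)) →
      IsValidPagination C (A.powersetCard (C / 2) ∪ B.powersetCard (C / 2))
        ((A.powersetCard (C / 2)).image (fun s => ({s, φ s} : Finset (Finset α)))) ∧
      ((A.powersetCard (C / 2)).image
        (fun s => ({s, φ s} : Finset (Finset α)))).card = C.choose (C / 2) ∧
      ∀ p ∈ (A.powersetCard (C / 2)).image (fun s => ({s, φ s} : Finset (Finset α))),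
        volume p = C) := by
  obtain ⟨k, hk⟩ := hE
  have hhalf : C / 2 = k := by omega
  have hkpos : 0 < k := by omega
  set TA := A.powersetCard (C / 2) with hTA
  set TB := B.powersetCard (C / 2) with hTB
  -- basic membership facts
  have hmemA : ∀ s, s ∈ TA ↔ s ⊆ A ∧ s.card = C / 2 := fun s => Finset.mem_powersetCard
  have hmemB : ∀ s, s ∈ TB ↔ s ⊆ B ∧ s.card = C / 2 := fun s => Finset.mem_powersetCard
  -- TA and TB are elementwise disjoint
  have hnotB : ∀ s ∈ TA, s ∉ TB := by
    intro s hs hs'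
    obtain ⟨hsA, hsc⟩ := (hmemA s).1 hs
    obtain ⟨hsB, -⟩ := (hmemB s).1 hs'
    have hne : s.Nonempty := Finset.card_pos.1 (by omega)
    obtain ⟨x, hx⟩ := hne
    exact (Finset.disjoint_left.1 hAB (hsA hx)) (hsB hx)
  -- nonemptiness of TA and TB
  have hTAne : TA.Nonempty := by
    obtain ⟨t, ht, htc⟩ := A.exists_subset_card_eq (n := C / 2) (by omega)
    exact ⟨t, (hmemA t).2 ⟨ht, htc⟩⟩
  have hTBne : TB.Nonempty := by
    obtain ⟨t, ht, htc⟩ := B.exists_subset_card_eq (n := C / 2) (by omega)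
    exact ⟨t, (hmemB t).2 ⟨ht, htc⟩⟩
  have hTATB : TA ≠ TB := by
    obtain ⟨s, hs⟩ := hTAne
    exact fun h => hnotB s hs (h ▸ hs)
  -- every element of A (resp B) lies in some tile
  have hcov : ∀ (X : Finset α), X.card = C → ∀ a ∈ X, ∃ s, s ∈ X.powersetCard (C / 2) ∧ a ∈ s := by
    intro X hX a ha
    obtain ⟨t, ht, htc⟩ := (X.erase a).exists_subset_card_eq (n := C / 2 - 1) (by
      rw [Finset.card_erase_of_mem ha, hX]; omega)
    have hat : a ∉ t := fun h => (Finset.mem_erase.1 (ht h)).1 rfl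
    refine ⟨insert a t, Finset.mem_powersetCard.2 ⟨?_, ?_⟩, Finset.mem_insert_self a t⟩
    · exact Finset.insert_subset ha (ht.trans (Finset.erase_subset a X))
    · rw [Finset.card_insert_of_notMem hat, htc]; omega
  -- volume bounds
  have hvolA : volume TA ≤ C := by
    have : TA.sup id ⊆ A := Finset.sup_le (fun s hs => ((hmemA s).1 hs).1)
    calc (TA.sup id).card ≤ A.card := Finset.card_le_card this
      _ = C := hA
  have hvolB : volume TB ≤ C := by
    have : TB.sup id ⊆ B := Finset.sup_le (fun s hs => ((hmemB s).1 hs).1)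
    calc (TB.sup id).card ≤ B.card := Finset.card_le_card this
      _ = C := hB
  -- union card
  have hABcard : (A ∪ B).card = 2 * C := by
    rw [Finset.card_union_of_disjoint hAB, hA, hB]; omega
  -- pair volume
  have hpair : ∀ ta ∈ TA, ∀ tb ∈ TB, (ta ∪ tb).card = C := by
    intro ta hta tb htb
    obtain ⟨htaA, htac⟩ := (hmemA ta).1 hta
    obtain ⟨htbB, htbc⟩ := (hmemB tb).1 htb
    have hd : Disjoint ta tb := Finset.disjoint_of_subset_left htaA
      (Finset.disjoint_of_subset_right htbB hAB)
    rw [Finset.card_union_of_disjoint hd, htac, htbc]; omega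
  refine ⟨hABcard, ⟨⟨?_, ?_, ?_⟩, ?_⟩, ?_, ?_, hpair, ?_⟩
  · intro p hp
    rcases Finset.mem_insert.1 hp with h | h
    · exact h ▸ hTAne
    · exact (Finset.mem_singleton.1 h) ▸ hTBne
  · intro p hp q hq hpq
    have hdis : Disjoint TA TB := Finset.disjoint_left.2 hnotB
    rcases Finset.mem_insert.1 hp with h | h
    · rcases Finset.mem_insert.1 hq with h' | h'
      · exact absurd (h.trans h'.symm) hpq
      · rw [Finset.mem_singleton] at h'; rw [h, h']; exact hdis
    · rw [Finset.mem_singleton] at h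
      rcases Finset.mem_insert.1 hq with h' | h'
      · rw [h, h']; exact hdis.symm
      · rw [Finset.mem_singleton] at h'; exact absurd (h.trans h'.symm) hpq
  · intro t
    constructor
    · intro ht
      rcases Finset.mem_union.1 ht with h | h
      · exact ⟨TA, Finset.mem_insert_self _ _, h⟩
      · exact ⟨TB, Finset.mem_insert.2 (Or.inr (Finset.mem_singleton_self _)), h⟩
    · rintro ⟨p, hp, htp⟩
      rcases Finset.mem_insert.1 hp with h | h
      · exact Finset.mem_union_left _ (h ▸ htp)
      · exact Finset.mem_union_right _ ((Finset.mem_singleton.1 h) ▸ htp)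
  · intro p hp
    rcases Finset.mem_insert.1 hp with h | h
    · exact h ▸ hvolA
    · exact (Finset.mem_singleton.1 h) ▸ hvolB
  · rw [Finset.card_insert_of_notMem (by simpa using hTATB), Finset.card_singleton]
  · -- optimality: any valid pagination has at least 2 pages
    rintro Q ⟨⟨hQne, hQdis, hQcov⟩, hQvol⟩
    by_contra h
    push_neg at h
    interval_cases hQc : Q.card
    · obtain ⟨ta, hta⟩ := hTAne
      obtain ⟨p, hp, -⟩ := (hQcov ta).1 (Finset.mem_union_left _ hta)
      simpa [Finset.card_eq_zero.1 hQc] using hp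
    · obtain ⟨p, hQ⟩ := Finset.card_eq_one.1 hQc
      have hsub : A ∪ B ⊆ p.sup id := by
        intro a ha
        rcases Finset.mem_union.1 ha with ha | ha
        · obtain ⟨s, hs, has⟩ := hcov A hA a ha
          obtain ⟨q, hq, hsq⟩ := (hQcov s).1 (Finset.mem_union_left _ hs)
          rw [hQ, Finset.mem_singleton] at hq
          have hsp : id s ≤ p.sup id := Finset.le_sup (hq ▸ hsq)
          exact Finset.le_iff_subset.mp hsp has
        · obtain ⟨s, hs, has⟩ := hcov B hB a ha
          obtain ⟨q, hq, hsq⟩ := (hQcov s).1 (Finset.mem_union_right _ hs)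
          rw [hQ, Finset.mem_singleton] at hq
          have hsp : id s ≤ p.sup id := Finset.le_sup (hq ▸ hsq)
          exact Finset.le_iff_subset.mp hsp has
      have := Finset.card_le_card hsub
      have hpv := hQvol p (hQ ▸ Finset.mem_singleton_self p)
      unfold volume at hpv
      omega
  · -- bijection part
    intro φ hφ
    have hmaps : ∀ s ∈ TA, φ s ∈ TB := fun s hs => hφ.mapsTo hs
    have hinj : ∀ s ∈ TA, ∀ s' ∈ TA, φ s = φ s' → s = s' := by
      intro s hs s' hs' h
      exact hφ.injOn hs hs' h
    have hne : ∀ s ∈ TA, s ≠ φ s := fun s hs h => hnotB s hs (h ▸ hmaps s hs)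
    have hvolp : ∀ s ∈ TA, volume ({s, φ s} : Finset (Finset α)) = C := by
      intro s hs
      have : ({s, φ s} : Finset (Finset α)).sup id = s ∪ φ s := by
        simp [Finset.sup_insert, Finset.sup_eq_union]
      rw [volume, this]
      exact hpair s hs (φ s) (hmaps s hs)
    refine ⟨⟨⟨?_, ?_, ?_⟩, ?_⟩, ?_, ?_⟩
    · rintro p hp
      obtain ⟨s, -, rfl⟩ := Finset.mem_image.1 hp
      exact ⟨s, Finset.mem_insert_self _ _⟩
    · rintro p hp q hq hpq
      obtain ⟨s, hs, rfl⟩ := Finset.mem_image.1 hp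
      obtain ⟨s', hs', rfl⟩ := Finset.mem_image.1 hq
      have hss' : s ≠ s' := fun h => hpq (h ▸ rfl)
      rw [Finset.disjoint_left]
      intro x hx hx'
      rcases Finset.mem_insert.1 hx with rfl | hx
      · rcases Finset.mem_insert.1 hx' with rfl | hx'
        · exact hss' rfl
        · rw [Finset.mem_singleton] at hx'
          exact hnotB x hs (hx' ▸ hmaps s' hs')
      · rw [Finset.mem_singleton] at hx
        subst hx
        rcases Finset.mem_insert.1 hx' with h | h
        · exact hnotB s' hs' (h ▸ hmaps s hs)
        · rw [Finset.mem_singleton] at h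
          exact hss' (hinj s hs s' hs' h)
    · intro t
      constructor
      · intro ht
        rcases Finset.mem_union.1 ht with h | h
        · exact ⟨{t, φ t}, Finset.mem_image_of_mem _ h, Finset.mem_insert_self _ _⟩
        · obtain ⟨s, hs, rfl⟩ := hφ.surjOn h
          exact ⟨{s, φ s}, Finset.mem_image_of_mem _ hs,
            Finset.mem_insert.2 (Or.inr (Finset.mem_singleton_self _))⟩
      · rintro ⟨p, hp, htp⟩
        obtain ⟨s, hs, rfl⟩ := Finset.mem_image.1 hp
        rcases Finset.mem_insert.1 htp with rfl | h
        · exact Finset.mem_union_left _ hs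
        · rw [Finset.mem_singleton] at h
          exact Finset.mem_union_right _ (h ▸ hmaps s hs)
    · intro p hp
      obtain ⟨s, hs, rfl⟩ := Finset.mem_image.1 hp
      exact le_of_eq (hvolp s hs)
    · rw [Finset.card_image_of_injOn, Finset.card_powersetCard, hA]
      intro s hs s' hs' h
      have hs : s ∈ TA := hs
      have hs' : s' ∈ TA := hs'
      have hh : ({s, φ s} : Finset (Finset α)) = {s', φ s'} := h
      have : s ∈ ({s', φ s'} : Finset (Finset α)) := hh ▸ Finset.mem_insert_self _ _
      rcases Finset.mem_insert.1 this with h' | h'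
      · exact h'
      · rw [Finset.mem_singleton] at h'
        exact absurd (h' ▸ hmaps s' hs') (hnotB s hs)
    · intro p hp
      obtain ⟨s, hs, rfl⟩ := Finset.mem_image.1 hp
      exact hvolp s hs
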